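/- For every $z \in \mathbb{C}^4$, $\frac{1}{\sqrt{2}} \|z\|_1 \le \|z\|_{\mathsf{X}} \le \|z\|_1$, where $\|z\|_1 = \sum_{i=1}^4 |z_i|$. -/

import Mathlib

open Complex Real

noncomputable def Xfun (z : Fin 4 → ℂ) (σ : ℝ) : ℝ :=
  ‖z 0 * Complex.exp (σ * Complex.I) + (starRingEnd ℂ) (z 3)‖ +
  ‖z 1 * Complex.exp (σ * Complex.I) + (starRingEnd ℂ) (z 2)‖

noncomputable def Xnorm (z : Fin 4 → ℂ) : ℝ := ⨆ σ : ℝ, Xfun z σ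

noncomputable def phase (z : Fin 4 → ℂ) : ℝ :=
  (Complex.arg (z 0) + Complex.arg (z 3)) - (Complex.arg (z 1) + Complex.arg (z 2))

lemma key (a b : ℂ) (t : ℝ) :
    (‖a‖ + ‖b‖) * |Real.cos (t/2)| ≤
      ‖a * Complex.exp (((Complex.arg b - Complex.arg a + t : ℝ) : ℂ) * Complex.I) + b‖ := by
  set A := ‖a‖ with hA
  set B := ‖b‖ with hB
  set α := Complex.arg a with hα
  set β := Complex.arg b with hβ
  have ha : (A : ℂ) * Complex.exp ((α:ℂ) * Complex.I) = a := Complex.norm_mul_exp_arg_mul_I a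
  have hb : (B : ℂ) * Complex.exp ((β:ℂ) * Complex.I) = b := Complex.norm_mul_exp_arg_mul_I b
  have e1 : Complex.exp ((α:ℂ)*Complex.I) * Complex.exp (((β-α+t:ℝ):ℂ)*Complex.I)
      = Complex.exp ((β:ℂ)*Complex.I) * Complex.exp ((t:ℂ)*Complex.I) := by
    rw [← Complex.exp_add, ← Complex.exp_add]
    congr 1
    push_cast
    ring
  have h1 : a * Complex.exp (((β - α + t : ℝ) : ℂ) * Complex.I) + b
      = Complex.exp ((β : ℂ) * Complex.I) * ((A:ℂ) * Complex.exp ((t:ℂ) * Complex.I) + B) := by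
    rw [← ha, ← hb, mul_assoc, e1]
    ring
  rw [h1, norm_mul, Complex.norm_exp_ofReal_mul_I, one_mul]
  have habs : ‖(A:ℂ) * Complex.exp ((t:ℂ) * Complex.I) + B‖ ^ 2
      = (A * Real.cos t + B)^2 + (A * Real.sin t)^2 := by
    rw [Complex.sq_norm, Complex.normSq_apply]
    simp [Complex.exp_ofReal_mul_I_re, Complex.exp_ofReal_mul_I_im]
    ring
  have hAn : 0 ≤ A := norm_nonneg a
  have hBn : 0 ≤ B := norm_nonneg b
  have hcs : Real.cos t = 2 * Real.cos (t/2)^2 - 1 := by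
    have h := Real.cos_sq (t/2)
    have h2 : 2 * (t/2) = t := by ring
    rw [h2] at h
    linarith
  have hss : Real.sin t ^ 2 = 1 - Real.cos t ^ 2 := by
    have := Real.sin_sq_add_cos_sq t
    linarith
  have hc1 : Real.cos (t / 2) ^ 2 ≤ 1 := by
    nlinarith [Real.sin_sq_add_cos_sq (t/2), sq_nonneg (Real.sin (t/2))]
  have hsq : ((A + B) * |Real.cos (t/2)|)^2 ≤ (A * Real.cos t + B)^2 + (A * Real.sin t)^2 := by
    have expand : (A * Real.cos t + B)^2 + (A * Real.sin t)^2 = A^2 + B^2 + 2*A*B*Real.cos t := by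
      rw [mul_pow, hss]; ring
    rw [mul_pow, _root_.sq_abs, expand, hcs]
    nlinarith [mul_nonneg (sq_nonneg (A-B)) (by linarith : (0:ℝ) ≤ 1 - Real.cos (t/2)^2)]
  have hnn : 0 ≤ (A + B) * |Real.cos (t/2)| := by positivity
  nlinarith [norm_nonneg ((A:ℂ) * Complex.exp ((t:ℂ) * Complex.I) + B), habs, hsq, hnn]

lemma key' (a b : ℂ) (t σ : ℝ) (h : σ = Complex.arg b - Complex.arg a + t) :
    (‖a‖ + ‖b‖) * |Real.cos (t/2)| ≤
      ‖a * Complex.exp ((σ : ℂ) * Complex.I) + b‖ := by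
  subst h; exact key a b t

theorem stmt_18 (z : Fin 4 → ℂ) :
    (1 / Real.sqrt 2) * (∑ i : Fin 4, ‖z i‖) ≤ Xnorm z ∧
    Xnorm z ≤ ∑ i : Fin 4, ‖z i‖ := by
  set S := ∑ i : Fin 4, ‖z i‖ with hS
  have hSeq : S = ‖z 0‖ + ‖z 1‖ + ‖z 2‖ + ‖z 3‖ := by
    rw [hS, Fin.sum_univ_four]
  have hub : ∀ σ : ℝ, Xfun z σ ≤ S := by
    intro σ
    rw [hSeq]; unfold Xfun
    have h1 := norm_add_le (z 0 * Complex.exp ((σ:ℂ) * Complex.I)) ((starRingEnd ℂ) (z 3))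
    have h2 := norm_add_le (z 1 * Complex.exp ((σ:ℂ) * Complex.I)) ((starRingEnd ℂ) (z 2))
    rw [norm_mul, Complex.norm_exp_ofReal_mul_I, mul_one, Complex.norm_conj] at h1 h2
    linarith
  have hbdd : BddAbove (Set.range (Xfun z)) := ⟨S, by rintro x ⟨σ, rfl⟩; exact hub σ⟩
  constructor
  · -- lower bound
    have hπ : (0:ℝ) < π := Real.pi_pos
    set α := Complex.arg ((starRingEnd ℂ) (z 3)) - Complex.arg (z 0) with hα
    set β := Complex.arg ((starRingEnd ℂ) (z 2)) - Complex.arg (z 1) with hβ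
    set θ := β - α with hθ
    set k := round (θ / (2 * π)) with hk
    set θ' := θ - 2 * π * k with hθ'
    have hθ'le : |θ'| ≤ π := by
      have h := abs_sub_round (θ / (2*π))
      have heq : θ' = (2*π) * (θ/(2*π) - (k:ℝ)) := by
        rw [hθ']
        field_simp
      rw [heq, abs_mul, abs_of_pos (by linarith : (0:ℝ) < 2*π)]
      calc 2*π * |θ/(2*π) - (k:ℝ)| ≤ 2*π * (1/2) := by
            apply mul_le_mul_of_nonneg_left h (by linarith)
        _ = π := by ring
    set σ := α + θ'/2 with hσ
    -- first term
    have key1 := key' (z 0) ((starRingEnd ℂ) (z 3)) (θ'/2) σ (by rw [hσ, hα])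
    have key2 := key' (z 1) ((starRingEnd ℂ) (z 2)) (σ - β) σ (by rw [hβ]; ring)
    -- cosine bounds
    have hc14 : Real.sqrt 2 / 2 ≤ Real.cos (θ'/4) := by
      rw [← Real.cos_pi_div_four, ← Real.cos_abs (θ'/4)]
      apply Real.cos_le_cos_of_nonneg_of_le_pi (abs_nonneg _) (by linarith)
      rw [abs_div, abs_of_pos (by norm_num : (0:ℝ) < 4)]
      calc |θ'| / 4 ≤ π / 4 := by linarith [hθ'le]
        _ ≤ π / 4 := le_refl _
    have hb1 : Real.sqrt 2 / 2 ≤ |Real.cos (θ'/2/2)| := by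
      have : θ'/2/2 = θ'/4 := by ring
      rw [this]
      exact le_trans hc14 (le_abs_self _)
    have hb2 : Real.sqrt 2 / 2 ≤ |Real.cos ((σ - β)/2)| := by
      have hσβ : (σ - β)/2 = -(θ'/4 + (k:ℝ) * π) := by
        rw [hσ, hθ', hθ]; ring
      rw [hσβ, Real.cos_neg, Real.cos_add, Real.sin_int_mul_pi, mul_zero, sub_zero,
        abs_mul, Real.abs_cos_int_mul_pi, mul_one]
      exact le_trans hc14 (le_abs_self _)
    have hAn : 0 ≤ ‖z 0‖ + ‖(starRingEnd ℂ) (z 3)‖ := by positivity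
    have hBn : 0 ≤ ‖z 1‖ + ‖(starRingEnd ℂ) (z 2)‖ := by positivity
    have hXlow : (1 / Real.sqrt 2) * S ≤ Xfun z σ := by
      have h1 : (‖z 0‖ + ‖(starRingEnd ℂ) (z 3)‖) * (Real.sqrt 2/2)
          ≤ ‖z 0 * Complex.exp ((σ:ℂ) * Complex.I) + (starRingEnd ℂ) (z 3)‖ :=
        le_trans (mul_le_mul_of_nonneg_left hb1 hAn) key1
      have h2 : (‖z 1‖ + ‖(starRingEnd ℂ) (z 2)‖) * (Real.sqrt 2/2)
          ≤ ‖z 1 * Complex.exp ((σ:ℂ) * Complex.I) + (starRingEnd ℂ) (z 2)‖ :=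
        le_trans (mul_le_mul_of_nonneg_left hb2 hBn) key2
      have h12 : 1/Real.sqrt 2 = Real.sqrt 2/2 := by
        have h2' : Real.sqrt 2 * Real.sqrt 2 = 2 := Real.mul_self_sqrt (by norm_num)
        have hpos : (0:ℝ) < Real.sqrt 2 := Real.sqrt_pos.mpr (by norm_num)
        field_simp
        nlinarith [h2']
      rw [h12, hSeq]
      unfold Xfun
      simp only [Complex.norm_conj] at h1 h2
      linarith
    exact le_trans hXlow (le_ciSup hbdd σ)
  · exact ciSup_le hub
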